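/- (Cuntz–Krieger Uniqueness Theorem) Let G be an effective ample Hausdorff groupoid, R a unital commutative ring, and (Σ, i, q) a discrete twist over G such that X_Σ = {u ∈ Σ⁽⁰⁾ : Σᵤᵘ ⊆ Iso(Σ)°} is dense in Σ⁽⁰⁾. Let Q be a ring and π : A_R(G; Σ) → Q a ring homomorphism. Then π is injective if and only if π(r 1̃_W) ≠ 0 for every nonempty compact open subset W of Σ⁽⁰⁾ and every r ∈ R \ {0}. -/

import Mathlib

open Set Function TopologicalSpace Classical
noncomputable section

universe u v w

/-- An étale topological groupoid, encoded with total operations: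
`mul a b` is only meaningful when `src a = rng b`. -/
structure EtaleGroupoid (G : Type u) [TopologicalSpace G] where
  mul : G → G → G
  inv : G → G
  src : G → G
  rng : G → G
  rng_mul_self : ∀ g, mul (rng g) g = g
  mul_src_self : ∀ g, mul g (src g) = g
  src_inv : ∀ g, src (inv g) = rng g
  rng_inv : ∀ g, rng (inv g) = src g
  inv_inv : ∀ g, inv (inv g) = g
  inv_mul_self : ∀ g, mul (inv g) g = src g
  mul_inv_self : ∀ g, mul g (inv g) = rng g
  mul_assoc' : ∀ a b c, src a = rng b → src b = rng c →
    mul (mul a b) c = mul a (mul b c)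
  src_mul : ∀ a b, src a = rng b → src (mul a b) = src b
  rng_mul : ∀ a b, src a = rng b → rng (mul a b) = rng a
  continuous_inv : Continuous inv
  continuousOn_mul :
    ContinuousOn (fun p : G × G => mul p.1 p.2) {p : G × G | src p.1 = rng p.2}
  isLocalHomeomorph_src : IsLocalHomeomorph src

namespace EtaleGroupoid

variable {G : Type u} [TopologicalSpace G] (𝒢 : EtaleGroupoid G)

/-- The unit space `G⁽⁰⁾`. -/
def unitSpace : Set G := Set.range 𝒢.src

/-- The isotropy bundle `Iso(G) = {γ : r γ = s γ}`. -/
def iso : Set G := {g | 𝒢.rng g = 𝒢.src g}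

/-- The isotropy group `Gᵤᵘ` at a unit `u`. -/
def isoAt (u : G) : Set G := {g | 𝒢.rng g = u ∧ 𝒢.src g = u}

/-- `U` is a bisection: `src` and `rng` are injective on `U`. -/
def IsBisection (U : Set G) : Prop := Set.InjOn 𝒢.src U ∧ Set.InjOn 𝒢.rng U

/-- `U` is a compact open bisection. -/
def IsCOB (U : Set G) : Prop := IsCompact U ∧ IsOpen U ∧ 𝒢.IsBisection U

/-- Pointwise inverse of a set. -/
def setInv (U : Set G) : Set G := 𝒢.inv '' U

/-- Pointwise product of two sets (only composable products). -/
def setMul (U V : Set G) : Set G :=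
  {g | ∃ a ∈ U, ∃ b ∈ V, 𝒢.src a = 𝒢.rng b ∧ g = 𝒢.mul a b}

/-- `H` is a subgroupoid of `G`. -/
def IsSubgroupoid (H : Set G) : Prop :=
  (∀ a ∈ H, 𝒢.inv a ∈ H) ∧
  (∀ a ∈ H, ∀ b ∈ H, 𝒢.src a = 𝒢.rng b → 𝒢.mul a b ∈ H) ∧
  (∀ a ∈ H, 𝒢.src a ∈ H)

/-- The groupoid is effective: the interior of the isotropy is the unit space. -/
def Effective : Prop := interior 𝒢.iso = 𝒢.unitSpace

/-- A continuous (i.e. locally constant) `Rˣ`-valued 2-cocycle on `G`. -/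
def IsCocycle {R : Type w} [CommRing R] (c : G → G → Rˣ) : Prop :=
  IsLocallyConstant (fun p : {p : G × G // 𝒢.src p.1 = 𝒢.rng p.2} => c p.1.1 p.1.2) ∧
  (∀ a b d, 𝒢.src a = 𝒢.rng b → 𝒢.src b = 𝒢.rng d →
    c a b * c (𝒢.mul a b) d = c b d * c a (𝒢.mul b d)) ∧
  (∀ g, c (𝒢.rng g) g = 1 ∧ c g (𝒢.src g) = 1)

/-- Membership in the (cocycle-twisted) Steinberg algebra `A_R(G)`:
locally constant, compactly supported functions `G → R`. -/
def MemSt {R : Type w} [CommRing R] (f : G → R) : Prop :=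
  IsLocallyConstant f ∧ ∃ K : Set G, IsCompact K ∧ Function.support f ⊆ K

/-- Convolution on `A_R(G;σ)` twisted by a 2-cocycle `c`. -/
noncomputable def convC {R : Type w} [CommRing R] (c : G → G → Rˣ) (f g : G → R) :
    G → R := fun γ =>
  ∑ᶠ p : G × G,
    if 𝒢.src p.1 = 𝒢.rng p.2 ∧ 𝒢.mul p.1 p.2 = γ then
      (c p.1 p.2 : R) * f p.1 * g p.2 else 0

/-- A continuous `Γ`-grading on `G` (for a discrete group `Γ`). -/
def IsGrading {Γ : Type*} [Group Γ] (c : G → Γ) : Prop :=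
  IsLocallyConstant c ∧ ∀ a b, 𝒢.src a = 𝒢.rng b → c (𝒢.mul a b) = c a * c b

end EtaleGroupoid

/-- An ample groupoid: étale with a basis of compact open bisections. -/
structure AmpleGroupoid (G : Type u) [TopologicalSpace G] extends EtaleGroupoid G where
  ample : TopologicalSpace.IsTopologicalBasis {U : Set G | toEtaleGroupoid.IsCOB U}

/-- A discrete twist `G⁽⁰⁾ × Rˣ → Σ → G` over an ample groupoid `G`. -/
structure DiscreteTwist (R : Type w) [CommRing R] {G : Type u} {S : Type v}
    [TopologicalSpace G] [TopologicalSpace S]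
    (𝒢 : AmpleGroupoid G) (𝒮 : EtaleGroupoid S) where
  i : G → Rˣ → S
  q : S → G
  continuousOn_i : ∀ t : Rˣ, ContinuousOn (fun x => i x t) 𝒢.unitSpace
  continuous_q : Continuous q
  i_injOn : Set.InjOn (fun p : G × Rˣ => i p.1 p.2) (𝒢.unitSpace ×ˢ (Set.univ : Set Rˣ))
  q_surj : Function.Surjective q
  exact' : ∀ x ∈ 𝒢.unitSpace, q ⁻¹' {x} = {σ | ∃ t : Rˣ, σ = i x t}
  i_mul : ∀ x ∈ 𝒢.unitSpace, ∀ s t : Rˣ, 𝒮.mul (i x s) (i x t) = i x (s * t)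
  unit_eq : 𝒮.unitSpace = (fun x => i x 1) '' 𝒢.unitSpace
  q_mul : ∀ a b, 𝒮.src a = 𝒮.rng b → q (𝒮.mul a b) = 𝒢.mul (q a) (q b)
  q_inv : ∀ a, q (𝒮.inv a) = 𝒢.inv (q a)
  q_src : ∀ a, q (𝒮.src a) = 𝒢.src (q a)
  q_rng : ∀ a, q (𝒮.rng a) = 𝒢.rng (q a)
  q_unit_bij : Set.BijOn q 𝒮.unitSpace 𝒢.unitSpace
  central : ∀ (σ : S) (t : Rˣ),
    𝒮.mul (i (𝒢.rng (q σ)) t) σ = 𝒮.mul σ (i (𝒢.src (q σ)) t)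
  loc_triv : ∀ α : G, ∃ B : Set G, IsOpen B ∧ α ∈ B ∧ 𝒢.IsBisection B ∧
    ∃ P : G → S, ContinuousOn P B ∧ (∀ β ∈ B, q (P β) = β) ∧
      (∀ t : Rˣ, ContinuousOn (fun β => 𝒮.mul (i (𝒢.rng β) t) (P β)) B) ∧
      (∀ σ : S, q σ ∈ B →
        ∃! p : G × Rˣ, p.1 ∈ B ∧ 𝒮.mul (i (𝒢.rng p.1) p.2) (P p.1) = σ) ∧
      (∀ t : Rˣ, ∀ V ⊆ B, IsOpen V →
        IsOpen ((fun β => 𝒮.mul (i (𝒢.rng β) t) (P β)) '' V))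

namespace DiscreteTwist

variable {R : Type w} [CommRing R] {G : Type u} {S : Type v}
  [TopologicalSpace G] [TopologicalSpace S]
  {𝒢 : AmpleGroupoid G} {𝒮 : EtaleGroupoid S} (T : DiscreteTwist R 𝒢 𝒮)

/-- The action of `Rˣ` on `Σ`: `t • σ = i(r σ, t) σ`. -/
def act (t : Rˣ) (σ : S) : S := 𝒮.mul (T.i (𝒢.rng (T.q σ)) t) σ

/-- The function `1̃_X` associated to a subset `X ⊆ Σ`. -/
noncomputable def tilde (X : Set S) : S → R := fun σ =>
  if h : ∃ t : Rˣ, σ ∈ T.act t '' X then (((Classical.choose h)⁻¹ : Rˣ) : R) else 0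

/-- Membership in the twisted Steinberg algebra `A_R(G;Σ)`: locally constant,
`Rˣ`-contravariant functions with compact image of the support in `G`. -/
def MemA (f : S → R) : Prop :=
  IsLocallyConstant f ∧
  (∀ (t : Rˣ) (σ : S), f (T.act t σ) = ((t⁻¹ : Rˣ) : R) * f σ) ∧
  IsCompact (T.q '' Function.support f)

/-- A (not necessarily continuous) section of `q`. -/
noncomputable def sec : G → S := Function.surjInv T.q_surj

/-- Convolution on `A_R(G;Σ)`, defined via the section `sec`. -/
noncomputable def conv (f g : S → R) : S → R := fun σ =>
  ∑ᶠ α : G,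
    if 𝒢.rng α = 𝒢.rng (T.q σ) then
      f (T.sec α) * g (𝒮.mul (𝒮.inv (T.sec α)) σ) else 0

end DiscreteTwist

end



open Set Function TopologicalSpace Classical
noncomputable section

namespace EtaleGroupoid

variable {X : Type*} [TopologicalSpace X] (E : EtaleGroupoid X)

lemma rng_src' (g : X) : E.rng (E.src g) = E.src g := by
  have h := E.rng_mul (E.inv g) g (by rw [E.src_inv])
  rw [E.inv_mul_self, E.rng_inv] at h
  exact h

lemma src_src' (g : X) : E.src (E.src g) = E.src g := by
  have h := E.src_mul (E.inv g) g (by rw [E.src_inv])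
  rw [E.inv_mul_self] at h
  exact h

lemma mem_unit_iff {u : X} : u ∈ E.unitSpace ↔ E.src u = u := by
  constructor
  · rintro ⟨g, rfl⟩; exact E.src_src' g
  · intro h; exact ⟨u, h⟩

lemma rng_of_unit {u : X} (hu : u ∈ E.unitSpace) : E.rng u = u := by
  rw [← (E.mem_unit_iff.mp hu)]
  rw [E.rng_src', E.mem_unit_iff.mp hu]

lemma src_of_unit {u : X} (hu : u ∈ E.unitSpace) : E.src u = u := E.mem_unit_iff.mp hu

lemma rng_mem_unit (g : X) : E.rng g ∈ E.unitSpace :=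
  ⟨E.inv g, E.src_inv g⟩

lemma src_mem_unit (g : X) : E.src g ∈ E.unitSpace := ⟨g, rfl⟩

lemma src_rng' (g : X) : E.src (E.rng g) = E.rng g := E.src_of_unit (E.rng_mem_unit g)

lemma rng_rng' (g : X) : E.rng (E.rng g) = E.rng g := E.rng_of_unit (E.rng_mem_unit g)

lemma inv_of_unit {u : X} (hu : u ∈ E.unitSpace) : E.inv u = u := by
  have hs : E.src u = u := E.src_of_unit hu
  have hr : E.rng u = u := E.rng_of_unit hu
  have h1 : E.inv u = E.mul (E.inv u) (E.src (E.inv u)) := (E.mul_src_self _).symm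
  rw [E.src_inv, hr, E.inv_mul_self, hs] at h1
  exact h1

lemma mul_unit_left {u g : X} (_hu : u ∈ E.unitSpace) (h : E.rng g = u) :
    E.mul u g = g := by
  rw [← h, E.rng_mul_self]

lemma mul_unit_right {g u : X} (_hu : u ∈ E.unitSpace) (h : E.src g = u) :
    E.mul g u = g := by
  rw [← h, E.mul_src_self]

lemma mul_cancel_right {a b c : X} (ha : E.src a = E.rng c) (hb : E.src b = E.rng c)
    (h : E.mul a c = E.mul b c) : a = b := by
  have key : ∀ x : X, E.src x = E.rng c → E.mul (E.mul x c) (E.inv c) = x := by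
    intro x hx
    rw [E.mul_assoc' x c (E.inv c) hx (by rw [E.rng_inv]), E.mul_inv_self, ← hx,
      E.mul_src_self]
  have := key a ha
  rw [h, key b hb] at this
  exact this.symm

lemma mul_cancel_left {a b c : X} (ha : E.src c = E.rng a) (hb : E.src c = E.rng b)
    (h : E.mul c a = E.mul c b) : a = b := by
  have key : ∀ x : X, E.src c = E.rng x → E.mul (E.inv c) (E.mul c x) = x := by
    intro x hx
    rw [← E.mul_assoc' (E.inv c) c x (by rw [E.src_inv]) hx, E.inv_mul_self, hx,
      E.rng_mul_self]
  have := key a ha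
  rw [h, key b hb] at this
  exact this.symm

lemma inv_mul_rev {a b : X} (h : E.src a = E.rng b) :
    E.inv (E.mul a b) = E.mul (E.inv b) (E.inv a) := by
  set c := E.mul (E.inv b) (E.inv a) with hc
  have hrc : E.rng c = E.src b := by
    rw [hc, E.rng_mul _ _ (by rw [E.src_inv, E.rng_inv, h]), E.rng_inv]
  have hk2 : E.mul (E.mul a b) c = E.rng a := by
    have h1 : E.mul b c = E.inv a := by
      rw [hc, ← E.mul_assoc' b (E.inv b) (E.inv a) (by rw [E.rng_inv])
        (by rw [E.src_inv, E.rng_inv, h]), E.mul_inv_self, ← h,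
        E.mul_unit_left (E.src_mem_unit a) (E.rng_inv a)]
    rw [E.mul_assoc' a b c h hrc.symm, h1, E.mul_inv_self]
  set e := E.mul a b with he
  have hse : E.src e = E.src b := E.src_mul a b h
  have hre : E.rng e = E.rng a := E.rng_mul a b h
  have : E.mul (E.inv e) (E.mul e c) = E.mul (E.mul (E.inv e) e) c :=
    (E.mul_assoc' (E.inv e) e c (by rw [E.src_inv]) (by rw [hse, hrc])).symm
  rw [hk2, E.inv_mul_self, hse] at this
  rw [E.mul_unit_right (E.rng_mem_unit a) (by rw [E.src_inv, hre]),
    E.mul_unit_left (E.src_mem_unit b) hrc] at this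
  exact this

lemma continuous_src : Continuous E.src := E.isLocalHomeomorph_src.continuous

lemma continuous_rng : Continuous E.rng := by
  have : E.rng = E.src ∘ E.inv := by
    funext g; simp [Function.comp, E.src_inv]
  rw [this]
  exact E.continuous_src.comp E.continuous_inv

lemma isOpenMap_src : IsOpenMap E.src := E.isLocalHomeomorph_src.isOpenMap

lemma isOpenMap_inv : IsOpenMap E.inv := by
  intro U hU
  have : E.inv '' U = E.inv ⁻¹' U := by
    ext g
    constructor
    · rintro ⟨h, hh, rfl⟩; simpa [E.inv_inv] using hh
    · intro hg; exact ⟨E.inv g, hg, E.inv_inv g⟩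
  rw [this]
  exact hU.preimage E.continuous_inv

lemma isOpen_unitSpace : IsOpen E.unitSpace := E.isOpenMap_src.isOpen_range

lemma isOpenMap_rng : IsOpenMap E.rng := by
  have : E.rng = E.src ∘ E.inv := by
    funext g; simp [Function.comp, E.src_inv]
  rw [this]
  exact E.isOpenMap_src.comp E.isOpenMap_inv

lemma unitSpace_eq_setOf : E.unitSpace = {g | E.src g = g} := by
  ext u; exact E.mem_unit_iff

lemma isClosed_unitSpace [T2Space X] : IsClosed E.unitSpace := by
  rw [E.unitSpace_eq_setOf]
  exact isClosed_eq E.continuous_src continuous_id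

lemma continuousOn_mulMap {Z : Type*} [TopologicalSpace Z] {f g : Z → X} {u : Set Z}
    (hf : ContinuousOn f u) (hg : ContinuousOn g u)
    (h : ∀ z ∈ u, E.src (f z) = E.rng (g z)) :
    ContinuousOn (fun z => E.mul (f z) (g z)) u := by
  have := E.continuousOn_mul.comp (hf.prodMk hg)
    (fun z hz => (show (f z, g z) ∈ {p : X × X | E.src p.1 = E.rng p.2} from h z hz))
  exact this

end EtaleGroupoid

namespace DiscreteTwist

variable {R : Type w} [CommRing R] {G : Type u} {S : Type v}
  [TopologicalSpace G] [TopologicalSpace S]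
  {𝒢 : AmpleGroupoid G} {𝒮 : EtaleGroupoid S} (T : DiscreteTwist R 𝒢 𝒮)

open EtaleGroupoid

lemma q_i {x : G} (hx : x ∈ 𝒢.unitSpace) (t : Rˣ) : T.q (T.i x t) = x := by
  have h := T.exact' x hx
  have h2 : T.i x t ∈ T.q ⁻¹' {x} := by rw [h]; exact ⟨t, rfl⟩
  simpa using h2

lemma i_one_mem {x : G} (hx : x ∈ 𝒢.unitSpace) : T.i x 1 ∈ 𝒮.unitSpace := by
  rw [T.unit_eq]; exact ⟨x, hx, rfl⟩

lemma eq_i_one {x : G} {τ : S} (hx : x ∈ 𝒢.unitSpace) (hτ : τ ∈ 𝒮.unitSpace)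
    (hq : T.q τ = x) : τ = T.i x 1 :=
  T.q_unit_bij.injOn hτ (T.i_one_mem hx) (by rw [hq, T.q_i hx])

lemma rng_sigma_eq (σ : S) : 𝒮.rng σ = T.i (𝒢.rng (T.q σ)) 1 :=
  T.eq_i_one (𝒢.rng_mem_unit _) (𝒮.rng_mem_unit σ) (T.q_rng σ)

lemma src_sigma_eq (σ : S) : 𝒮.src σ = T.i (𝒢.src (T.q σ)) 1 :=
  T.eq_i_one (𝒢.src_mem_unit _) (𝒮.src_mem_unit σ) (T.q_src σ)

lemma src_i {x : G} (hx : x ∈ 𝒢.unitSpace) (t : Rˣ) : 𝒮.src (T.i x t) = T.i x 1 := by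
  rw [T.src_sigma_eq (T.i x t), T.q_i hx, 𝒢.src_of_unit hx]

lemma rng_i {x : G} (hx : x ∈ 𝒢.unitSpace) (t : Rˣ) : 𝒮.rng (T.i x t) = T.i x 1 := by
  rw [T.rng_sigma_eq (T.i x t), T.q_i hx, 𝒢.rng_of_unit hx]

lemma comp_act (σ : S) (t : Rˣ) :
    𝒮.src (T.i (𝒢.rng (T.q σ)) t) = 𝒮.rng σ := by
  rw [T.src_i (𝒢.rng_mem_unit _) t, T.rng_sigma_eq]

lemma q_act (t : Rˣ) (σ : S) : T.q (T.act t σ) = T.q σ := by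
  show T.q (𝒮.mul (T.i (𝒢.rng (T.q σ)) t) σ) = T.q σ
  rw [T.q_mul _ _ (T.comp_act σ t), T.q_i (𝒢.rng_mem_unit _)]
  exact 𝒢.mul_unit_left (𝒢.rng_mem_unit _) rfl

lemma act_one (σ : S) : T.act 1 σ = σ := by
  show 𝒮.mul (T.i (𝒢.rng (T.q σ)) 1) σ = σ
  rw [← T.rng_sigma_eq, 𝒮.rng_mul_self]

lemma act_act (t s : Rˣ) (σ : S) : T.act t (T.act s σ) = T.act (t * s) σ := by
  show 𝒮.mul (T.i (𝒢.rng (T.q (T.act s σ))) t) (T.act s σ) = T.act (t * s) σ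
  rw [T.q_act]
  show 𝒮.mul (T.i (𝒢.rng (T.q σ)) t) (𝒮.mul (T.i (𝒢.rng (T.q σ)) s) σ)
      = 𝒮.mul (T.i (𝒢.rng (T.q σ)) (t * s)) σ
  rw [← 𝒮.mul_assoc' _ _ _ (by rw [T.src_i (𝒢.rng_mem_unit _), T.rng_i (𝒢.rng_mem_unit _)])
    (T.comp_act σ s), T.i_mul _ (𝒢.rng_mem_unit _)]

lemma i_inj {x : G} (hx : x ∈ 𝒢.unitSpace) {s t : Rˣ} (h : T.i x s = T.i x t) : s = t := by
  have := T.i_injOn (show ((x, s) : G × Rˣ) ∈ 𝒢.unitSpace ×ˢ (univ : Set Rˣ) from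
    ⟨hx, mem_univ _⟩) (show ((x, t) : G × Rˣ) ∈ 𝒢.unitSpace ×ˢ (univ : Set Rˣ) from
    ⟨hx, mem_univ _⟩) h
  exact congrArg Prod.snd this

lemma act_cancel {s t : Rˣ} {σ : S} (h : T.act s σ = T.act t σ) : s = t := by
  have h2 : T.act (t⁻¹ * s) σ = σ := by
    rw [← T.act_act, h, T.act_act, inv_mul_cancel, T.act_one]
  have h3 : 𝒮.mul (T.i (𝒢.rng (T.q σ)) (t⁻¹ * s)) σ
      = 𝒮.mul (T.i (𝒢.rng (T.q σ)) 1) σ := by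
    show T.act (t⁻¹ * s) σ = T.act 1 σ
    rw [h2, T.act_one]
  have h4 := 𝒮.mul_cancel_right (T.comp_act σ (t⁻¹ * s)) (T.comp_act σ 1) h3
  have h5 := T.i_inj (𝒢.rng_mem_unit _) h4
  exact (inv_mul_eq_one.mp h5).symm

lemma act_continuous (t : Rˣ) : Continuous (T.act t) := by
  have h1 : Continuous fun σ : S => 𝒢.rng (T.q σ) := 𝒢.continuous_rng.comp T.continuous_q
  have h2 : Continuous fun σ : S => T.i (𝒢.rng (T.q σ)) t :=
    (T.continuousOn_i t).comp_continuous h1 (fun σ => 𝒢.rng_mem_unit _)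
  have h3 := 𝒮.continuousOn_mulMap (u := (univ : Set S)) h2.continuousOn
    continuous_id.continuousOn (fun σ _ => T.comp_act σ t)
  exact continuousOn_univ.mp h3

lemma act_leftInv (t : Rˣ) (σ : S) : T.act t⁻¹ (T.act t σ) = σ := by
  rw [T.act_act, inv_mul_cancel, T.act_one]

lemma act_rightInv (t : Rˣ) (σ : S) : T.act t (T.act t⁻¹ σ) = σ := by
  rw [T.act_act, mul_inv_cancel, T.act_one]

lemma act_isOpenMap (t : Rˣ) : IsOpenMap (T.act t) := by
  intro U hU
  have himg : T.act t '' U = T.act t⁻¹ ⁻¹' U := by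
    ext σ
    constructor
    · rintro ⟨τ, hτ, rfl⟩
      simpa [T.act_leftInv] using hτ
    · intro h
      exact ⟨T.act t⁻¹ σ, h, T.act_rightInv t σ⟩
  rw [himg]
  exact hU.preimage (T.act_continuous t⁻¹)

lemma inv_i {x : G} (hx : x ∈ 𝒢.unitSpace) (t : Rˣ) : 𝒮.inv (T.i x t) = T.i x t⁻¹ := by
  refine (𝒮.mul_cancel_left (a := T.i x t⁻¹) (b := 𝒮.inv (T.i x t)) (c := T.i x t)
    (by rw [T.src_i hx, T.rng_i hx]) (by rw [𝒮.rng_inv]) ?_).symm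
  rw [𝒮.mul_inv_self, T.i_mul x hx, mul_inv_cancel, T.rng_i hx]

lemma act_inv (t : Rˣ) (σ : S) : 𝒮.inv (T.act t σ) = T.act t⁻¹ (𝒮.inv σ) := by
  show 𝒮.inv (𝒮.mul (T.i (𝒢.rng (T.q σ)) t) σ)
      = 𝒮.mul (T.i (𝒢.rng (T.q (𝒮.inv σ))) t⁻¹) (𝒮.inv σ)
  rw [𝒮.inv_mul_rev (T.comp_act σ t), T.inv_i (𝒢.rng_mem_unit _) t]
  have hc := T.central (𝒮.inv σ) t⁻¹
  rw [T.q_inv σ, 𝒢.src_inv] at hc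
  rw [← hc, T.q_inv σ, 𝒢.rng_inv]

lemma act_mul_left {σ τ : S} (h : 𝒮.src σ = 𝒮.rng τ) (t : Rˣ) :
    T.act t (𝒮.mul σ τ) = 𝒮.mul (T.act t σ) τ := by
  have hq : 𝒢.src (T.q σ) = 𝒢.rng (T.q τ) := by
    have := congrArg T.q h
    rwa [T.q_src, T.q_rng] at this
  have hqm : T.q (𝒮.mul σ τ) = 𝒢.mul (T.q σ) (T.q τ) := T.q_mul _ _ h
  show 𝒮.mul (T.i (𝒢.rng (T.q (𝒮.mul σ τ))) t) (𝒮.mul σ τ)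
      = 𝒮.mul (𝒮.mul (T.i (𝒢.rng (T.q σ)) t) σ) τ
  rw [hqm, 𝒢.rng_mul _ _ hq]
  exact (𝒮.mul_assoc' _ _ _ (T.comp_act σ t) h).symm

lemma mul_act_right {σ τ : S} (h : 𝒮.src σ = 𝒮.rng τ) (t : Rˣ) :
    𝒮.mul σ (T.act t τ) = T.act t (𝒮.mul σ τ) := by
  have hq : 𝒢.src (T.q σ) = 𝒢.rng (T.q τ) := by
    have := congrArg T.q h
    rwa [T.q_src, T.q_rng] at this
  show 𝒮.mul σ (𝒮.mul (T.i (𝒢.rng (T.q τ)) t) τ) = T.act t (𝒮.mul σ τ)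
  rw [← 𝒮.mul_assoc' σ _ τ
    (by rw [T.rng_i (𝒢.rng_mem_unit _), T.src_sigma_eq, hq]) (T.comp_act τ t)]
  have hc := T.central σ t
  rw [hq] at hc
  rw [← hc]
  exact (T.act_mul_left h t).symm

lemma exists_act_of_q_eq {σ τ : S} (h : T.q σ = T.q τ) : ∃ t : Rˣ, σ = T.act t τ := by
  have hcomp : 𝒮.src σ = 𝒮.rng (𝒮.inv τ) := by
    rw [𝒮.rng_inv, T.src_sigma_eq σ, T.src_sigma_eq τ, h]
  have hqδ : T.q (𝒮.mul σ (𝒮.inv τ)) = 𝒢.rng (T.q τ) := by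
    rw [T.q_mul _ _ hcomp, T.q_inv, h, 𝒢.mul_inv_self]
  have hmem : 𝒮.mul σ (𝒮.inv τ) ∈ T.q ⁻¹' {𝒢.rng (T.q τ)} := by
    simp [hqδ]
  rw [T.exact' _ (𝒢.rng_mem_unit _)] at hmem
  obtain ⟨t, ht⟩ := hmem
  refine ⟨t, ?_⟩
  show σ = 𝒮.mul (T.i (𝒢.rng (T.q τ)) t) τ
  rw [← ht, 𝒮.mul_assoc' σ (𝒮.inv τ) τ hcomp (𝒮.src_inv τ), 𝒮.inv_mul_self]
  rw [𝒮.mul_unit_right (𝒮.src_mem_unit τ) (by rw [T.src_sigma_eq σ, T.src_sigma_eq τ, h])]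

lemma act_i_one {x : G} (hx : x ∈ 𝒢.unitSpace) (t : Rˣ) :
    T.act t (T.i x 1) = T.i x t := by
  show 𝒮.mul (T.i (𝒢.rng (T.q (T.i x 1))) t) (T.i x 1) = T.i x t
  rw [T.q_i hx, 𝒢.rng_of_unit hx, T.i_mul _ hx, mul_one]

lemma scalar_of_q_mem {σ : S} (h : T.q σ ∈ 𝒢.unitSpace) : ∃ t : Rˣ, σ = T.i (T.q σ) t := by
  have hmem : σ ∈ T.q ⁻¹' {T.q σ} := rfl
  rw [T.exact' _ h] at hmem
  exact hmem

end DiscreteTwist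


namespace DiscreteTwist

variable {R : Type w} [CommRing R] {G : Type u} {S : Type v}
  [TopologicalSpace G] [TopologicalSpace S]
  {𝒢 : AmpleGroupoid G} {𝒮 : EtaleGroupoid S}

open EtaleGroupoid

lemma unit_coe_ne_zero [Nontrivial R] (t : Rˣ) : (t : R) ≠ 0 := by
  intro h
  have h1 : (t : R) * ((t⁻¹ : Rˣ) : R) = 1 := Units.mul_inv t
  rw [h, zero_mul] at h1
  exact zero_ne_one h1

/-- A slice datum for the twist `T`. -/
structure Slice (T : DiscreteTwist R 𝒢 𝒮) where
  Y : Set G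
  B : Set G
  P : G → S
  hYB : Y ⊆ B
  hBopen : IsOpen B
  hYcpt : IsCompact Y
  hYbis : EtaleGroupoid.IsBisection 𝒢.toEtaleGroupoid Y
  hPcont : ContinuousOn P B
  hqP : ∀ α ∈ B, T.q (P α) = α
  hXopen : IsOpen (P '' Y)

variable {T : DiscreteTwist R 𝒢 𝒮}

/-- The slice as a subset of `Σ`. -/
def Slice.X (SL : Slice T) : Set S := SL.P '' SL.Y

lemma Slice.hXopen' (SL : Slice T) : IsOpen SL.X := SL.hXopen

lemma Slice.q_P (SL : Slice T) {α : G} (h : α ∈ SL.Y) : T.q (SL.P α) = α :=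
  SL.hqP α (SL.hYB h)

lemma Slice.P_mem_X (SL : Slice T) {α : G} (h : α ∈ SL.Y) : SL.P α ∈ SL.X := ⟨α, h, rfl⟩

lemma Slice.mem_orbit_iff (SL : Slice T) (σ : S) :
    (∃ t : Rˣ, σ ∈ T.act t '' SL.X) ↔ T.q σ ∈ SL.Y := by
  constructor
  · rintro ⟨t, τ, hτ, rfl⟩
    obtain ⟨α, hα, rfl⟩ := hτ
    rw [T.q_act, SL.q_P hα]
    exact hα
  · intro h
    obtain ⟨t, ht⟩ := T.exists_act_of_q_eq (show T.q σ = T.q (SL.P (T.q σ)) from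
      (SL.q_P h).symm)
    exact ⟨t, SL.P (T.q σ), SL.P_mem_X h, ht.symm⟩

lemma Slice.exists_rep (SL : Slice T) {σ : S} (h : T.q σ ∈ SL.Y) :
    ∃ t : Rˣ, σ = T.act t (SL.P (T.q σ)) :=
  T.exists_act_of_q_eq (show T.q σ = T.q (SL.P (T.q σ)) from (SL.q_P h).symm)

lemma Slice.tilde_eval (SL : Slice T) {α : G} (hα : α ∈ SL.Y) (t : Rˣ) :
    T.tilde SL.X (T.act t (SL.P α)) = ((t⁻¹ : Rˣ) : R) := by
  have hex : ∃ s : Rˣ, T.act t (SL.P α) ∈ T.act s '' SL.X :=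
    ⟨t, SL.P α, SL.P_mem_X hα, rfl⟩
  have heq : T.tilde SL.X (T.act t (SL.P α)) = (((Classical.choose hex)⁻¹ : Rˣ) : R) := by
    simp only [DiscreteTwist.tilde]
    rw [dif_pos hex]
  obtain ⟨τ, hτX, hτ⟩ := Classical.choose_spec hex
  obtain ⟨α', hα', rfl⟩ := hτX
  have hq1 : α' = α := by
    have h1 : T.q (T.act (Classical.choose hex) (SL.P α')) = α' := by
      rw [T.q_act, SL.q_P hα']
    have h2 : T.q (T.act t (SL.P α)) = α := by rw [T.q_act, SL.q_P hα]
    rw [← h1, hτ, h2]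
  subst hq1
  have : Classical.choose hex = t := T.act_cancel hτ
  rw [heq, this]

lemma Slice.tilde_eq_zero (SL : Slice T) {σ : S} (h : T.q σ ∉ SL.Y) :
    T.tilde SL.X σ = 0 := by
  simp only [DiscreteTwist.tilde]
  rw [dif_neg]
  intro hex
  exact h ((SL.mem_orbit_iff σ).mp hex)

lemma Slice.tilde_support (SL : Slice T) [Nontrivial R] :
    Function.support (T.tilde SL.X) = T.q ⁻¹' SL.Y := by
  ext σ
  simp only [Function.mem_support, Set.mem_preimage]
  constructor
  · intro h
    by_contra hq
    exact h (SL.tilde_eq_zero hq)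
  · intro h
    obtain ⟨t, ht⟩ := SL.exists_rep h
    rw [ht, SL.tilde_eval h t]
    exact unit_coe_ne_zero _

lemma Slice.tilde_equivariant (SL : Slice T) (t : Rˣ) (σ : S) :
    T.tilde SL.X (T.act t σ) = ((t⁻¹ : Rˣ) : R) * T.tilde SL.X σ := by
  by_cases h : T.q σ ∈ SL.Y
  · obtain ⟨s, hs⟩ := SL.exists_rep h
    rw [hs, T.act_act, SL.tilde_eval h, SL.tilde_eval h s]
    rw [mul_inv_rev]
    push_cast
    ring
  · rw [SL.tilde_eq_zero h, SL.tilde_eq_zero (by rwa [T.q_act]), mul_zero]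

lemma Slice.tilde_memA (SL : Slice T) [T2Space G] [Nontrivial R] :
    T.MemA (T.tilde SL.X) := by
  refine ⟨?_, SL.tilde_equivariant, ?_⟩
  · rw [IsLocallyConstant.iff_exists_open]
    intro σ
    by_cases h : T.q σ ∈ SL.Y
    · obtain ⟨t, ht⟩ := SL.exists_rep h
      refine ⟨T.act t '' SL.X, T.act_isOpenMap t _ SL.hXopen, ⟨SL.P (T.q σ), SL.P_mem_X h, ht.symm⟩, ?_⟩
      rintro σ' ⟨τ, hτ, rfl⟩
      obtain ⟨α, hα, rfl⟩ := hτ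
      rw [SL.tilde_eval hα t, ht, SL.tilde_eval h t]
    · refine ⟨(T.q ⁻¹' SL.Y)ᶜ, ?_, h, ?_⟩
      · exact (IsClosed.preimage T.continuous_q (SL.hYcpt.isClosed)).isOpen_compl
      · intro σ' hσ'
        rw [SL.tilde_eq_zero hσ', SL.tilde_eq_zero h]
  · rw [SL.tilde_support]
    rw [Set.image_preimage_eq SL.Y T.q_surj]
    exact SL.hYcpt

end DiscreteTwist

namespace DiscreteTwist

variable {R : Type w} [CommRing R] {G : Type u} {S : Type v}
  [TopologicalSpace G] [TopologicalSpace S]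
  {𝒢 : AmpleGroupoid G} {𝒮 : EtaleGroupoid S} {T : DiscreteTwist R 𝒢 𝒮}

open EtaleGroupoid

lemma q_sec (T : DiscreteTwist R 𝒢 𝒮) (α : G) : T.q (T.sec α) = α :=
  Function.surjInv_eq T.q_surj α

lemma conv_left_eval (SL : Slice T) {f : S → R}
    (hf : ∀ (t : Rˣ) (σ : S), f (T.act t σ) = ((t⁻¹ : Rˣ) : R) * f σ)
    {σ : S} {α : G} (hα : α ∈ SL.Y) (hrng : 𝒢.rng α = 𝒢.rng (T.q σ)) :
    T.conv (T.tilde SL.X) f σ = f (𝒮.mul (𝒮.inv (SL.P α)) σ) := by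
  simp only [DiscreteTwist.conv]
  rw [finsum_eq_single _ α ?_]
  · rw [if_pos hrng]
    obtain ⟨s, hs⟩ : ∃ s : Rˣ, T.sec α = T.act s (SL.P α) :=
      T.exists_act_of_q_eq (by rw [T.q_sec, SL.q_P hα])
    have hcomp : 𝒮.src (𝒮.inv (SL.P α)) = 𝒮.rng σ := by
      rw [𝒮.src_inv, T.rng_sigma_eq (SL.P α), SL.q_P hα, hrng, ← T.rng_sigma_eq]
    rw [hs, SL.tilde_eval hα s, T.act_inv, ← T.act_mul_left hcomp s⁻¹, hf s⁻¹,
      _root_.inv_inv, ← mul_assoc]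
    norm_cast
    rw [inv_mul_cancel, Units.val_one, one_mul]
  · intro β hβ
    by_cases hc : 𝒢.rng β = 𝒢.rng (T.q σ)
    · have hβY : β ∉ SL.Y := by
        intro hmem
        exact hβ (SL.hYbis.2 hmem hα (hc.trans hrng.symm))
      rw [if_pos hc, SL.tilde_eq_zero (by rw [T.q_sec]; exact hβY), zero_mul]
    · rw [if_neg hc]

lemma conv_left_zero (SL : Slice T) (f : S → R) {σ : S}
    (h : ∀ α ∈ SL.Y, 𝒢.rng α ≠ 𝒢.rng (T.q σ)) :
    T.conv (T.tilde SL.X) f σ = 0 := by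
  simp only [DiscreteTwist.conv]
  apply finsum_eq_zero_of_forall_eq_zero
  intro β
  by_cases hc : 𝒢.rng β = 𝒢.rng (T.q σ)
  · have hβY : β ∉ SL.Y := fun hmem => h β hmem hc
    rw [if_pos hc, SL.tilde_eq_zero (by rw [T.q_sec]; exact hβY), zero_mul]
  · rw [if_neg hc]

/-- The slice of units over a compact open subset of the unit space. -/
def unitSlice (T : DiscreteTwist R 𝒢 𝒮) {V : Set G} (hVsub : V ⊆ 𝒢.unitSpace)
    (hVopen : IsOpen V) (hVcpt : IsCompact V) : Slice T where
  Y := V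
  B := 𝒢.unitSpace
  P := fun v => T.i v 1
  hYB := hVsub
  hBopen := 𝒢.isOpen_unitSpace
  hYcpt := hVcpt
  hYbis := by
    constructor
    · intro a ha b hb hab
      rwa [𝒢.src_of_unit (hVsub ha), 𝒢.src_of_unit (hVsub hb)] at hab
    · intro a ha b hb hab
      rwa [𝒢.rng_of_unit (hVsub ha), 𝒢.rng_of_unit (hVsub hb)] at hab
  hPcont := T.continuousOn_i 1
  hqP := fun α hα => T.q_i hα 1
  hXopen := by
    have heq : (fun v => T.i v 1) '' V = 𝒮.unitSpace ∩ T.q ⁻¹' V := by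
      ext τ
      constructor
      · rintro ⟨v, hv, rfl⟩
        exact ⟨T.i_one_mem (hVsub hv), by
          rw [Set.mem_preimage, T.q_i (hVsub hv)]; exact hv⟩
      · rintro ⟨hτu, hτq⟩
        exact ⟨T.q τ, hτq, (T.eq_i_one (hVsub hτq) hτu rfl).symm⟩
    rw [heq]
    exact (𝒮.isOpen_unitSpace).inter (hVopen.preimage T.continuous_q)

section UnitSlice

variable {V : Set G}

lemma unitSlice_key (hVsub : V ⊆ 𝒢.unitSpace) {σ : S} {β : G}
    (hc : 𝒢.rng β = 𝒢.rng (T.q σ))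
    (hv : 𝒢.mul (𝒢.inv β) (T.q σ) ∈ V) : β = T.q σ ∧ 𝒢.src (T.q σ) ∈ V := by
  set v := 𝒢.mul (𝒢.inv β) (T.q σ) with hvdef
  have hvu : v ∈ 𝒢.unitSpace := hVsub hv
  have hcomp : 𝒢.src (𝒢.inv β) = 𝒢.rng (T.q σ) := by rw [𝒢.src_inv, hc]
  have hv1 : v = 𝒢.src (T.q σ) := by
    rw [← 𝒢.src_of_unit hvu, hvdef, 𝒢.src_mul _ _ hcomp]
  have hv2 : v = 𝒢.src β := by
    rw [← 𝒢.rng_of_unit hvu, hvdef, 𝒢.rng_mul _ _ hcomp, 𝒢.rng_inv]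
  have hβ : β = T.q σ := by
    have e1 : 𝒢.mul β v = β := by rw [hv2, 𝒢.mul_src_self]
    have e2 : 𝒢.mul β v = T.q σ := by
      rw [hvdef, ← 𝒢.mul_assoc' β (𝒢.inv β) (T.q σ) (𝒢.rng_inv β).symm hcomp,
        𝒢.mul_inv_self, hc, 𝒢.rng_mul_self]
    rw [← e1, e2]
  exact ⟨hβ, hv1 ▸ hv⟩

lemma q_mul_inv_sec {σ : S} {β : G} (hc : 𝒢.rng β = 𝒢.rng (T.q σ)) :
    T.q (𝒮.mul (𝒮.inv (T.sec β)) σ) = 𝒢.mul (𝒢.inv β) (T.q σ) := by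
  have hcomp : 𝒮.src (𝒮.inv (T.sec β)) = 𝒮.rng σ := by
    rw [𝒮.src_inv, T.rng_sigma_eq (T.sec β), T.q_sec, hc, ← T.rng_sigma_eq]
  rw [T.q_mul _ _ hcomp, T.q_inv, T.q_sec]

lemma conv_right_unit (hVsub : V ⊆ 𝒢.unitSpace) (hVopen : IsOpen V)
    (hVcpt : IsCompact V) {f : S → R}
    (hf : ∀ (t : Rˣ) (σ : S), f (T.act t σ) = ((t⁻¹ : Rˣ) : R) * f σ) (σ : S) :
    T.conv f (T.tilde (unitSlice T hVsub hVopen hVcpt).X) σ =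
      if 𝒢.src (T.q σ) ∈ V then f σ else 0 := by
  set SV := unitSlice T hVsub hVopen hVcpt with hSV
  have hzero : ∀ β, β ≠ T.q σ → (if 𝒢.rng β = 𝒢.rng (T.q σ) then
      f (T.sec β) * T.tilde SV.X (𝒮.mul (𝒮.inv (T.sec β)) σ) else 0) = 0 := by
    intro β hβ
    by_cases hc : 𝒢.rng β = 𝒢.rng (T.q σ)
    · by_cases hm : T.q (𝒮.mul (𝒮.inv (T.sec β)) σ) ∈ V
      · rw [q_mul_inv_sec hc] at hm
        exact absurd (unitSlice_key hVsub hc hm).1 hβ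
      · rw [if_pos hc, SV.tilde_eq_zero hm, mul_zero]
    · rw [if_neg hc]
  by_cases hsrc : 𝒢.src (T.q σ) ∈ V
  · simp only [DiscreteTwist.conv]
    rw [finsum_eq_single _ (T.q σ) hzero, if_pos rfl, if_pos hsrc]
    obtain ⟨t, ht⟩ : ∃ t : Rˣ, σ = T.act t (T.sec (T.q σ)) :=
      T.exists_act_of_q_eq (by rw [T.q_sec])
    have hqs : T.q (T.sec (T.q σ)) = T.q σ := T.q_sec (T.q σ)
    revert ht hqs
    generalize T.sec (T.q σ) = τ
    intro ht hqs
    have hm : 𝒮.mul (𝒮.inv τ) σ = T.i (𝒢.src (T.q σ)) t := by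
      conv_lhs => rw [ht]
      rw [T.mul_act_right (by rw [𝒮.src_inv]) t, 𝒮.inv_mul_self, T.src_sigma_eq τ, hqs,
        T.act_i_one (𝒢.src_mem_unit _) t]
    have htilde : T.tilde SV.X (T.i (𝒢.src (T.q σ)) t) = ((t⁻¹ : Rˣ) : R) := by
      have heq2 : T.i (𝒢.src (T.q σ)) t = T.act t (SV.P (𝒢.src (T.q σ))) := by
        show T.i (𝒢.src (T.q σ)) t = T.act t (T.i (𝒢.src (T.q σ)) 1)
        rw [T.act_i_one (𝒢.src_mem_unit _) t]
      rw [heq2, SV.tilde_eval hsrc t]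
    have hfs : f τ = ((t : Rˣ) : R) * f σ := by
      have hsec : τ = T.act t⁻¹ σ := by rw [ht, T.act_leftInv]
      rw [hsec, hf t⁻¹, _root_.inv_inv]
    rw [hm, htilde, hfs, mul_comm ((t : Rˣ) : R) (f σ), mul_assoc, Units.mul_inv,
      mul_one]
  · simp only [DiscreteTwist.conv]
    rw [if_neg hsrc]
    apply finsum_eq_zero_of_forall_eq_zero
    intro β
    by_cases hβ : β = T.q σ
    · subst hβ
      rw [if_pos rfl]
      have hm : T.q (𝒮.mul (𝒮.inv (T.sec (T.q σ))) σ) ∉ V := by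
        rw [q_mul_inv_sec rfl]
        intro hmem
        exact hsrc (unitSlice_key hVsub rfl hmem).2
      rw [SV.tilde_eq_zero hm, mul_zero]
    · exact hzero β hβ

lemma conv_left_unit (hVsub : V ⊆ 𝒢.unitSpace) (hVopen : IsOpen V)
    (hVcpt : IsCompact V) {f : S → R}
    (hf : ∀ (t : Rˣ) (σ : S), f (T.act t σ) = ((t⁻¹ : Rˣ) : R) * f σ) (σ : S) :
    T.conv (T.tilde (unitSlice T hVsub hVopen hVcpt).X) f σ =
      if 𝒢.rng (T.q σ) ∈ V then f σ else 0 := by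
  set SV := unitSlice T hVsub hVopen hVcpt with hSV
  by_cases hr : 𝒢.rng (T.q σ) ∈ V
  · rw [if_pos hr]
    have := conv_left_eval SV hf (α := 𝒢.rng (T.q σ)) hr (𝒢.rng_rng' _)
    rw [this]
    show f (𝒮.mul (𝒮.inv (T.i (𝒢.rng (T.q σ)) 1)) σ) = f σ
    rw [T.inv_i (𝒢.rng_mem_unit _) 1, inv_one, ← T.rng_sigma_eq, 𝒮.rng_mul_self]
  · rw [if_neg hr]
    apply conv_left_zero
    intro α hαV hrngeq
    apply hr
    rw [← hrngeq, 𝒢.rng_of_unit (hVsub hαV)]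
    exact hαV

end UnitSlice

end DiscreteTwist

namespace DiscreteTwist

variable {R : Type w} [CommRing R] {G : Type u} {S : Type v}
  [TopologicalSpace G] [TopologicalSpace S]
  {𝒢 : AmpleGroupoid G} {𝒮 : EtaleGroupoid S} {T : DiscreteTwist R 𝒢 𝒮}

open EtaleGroupoid

lemma memA_zero : T.MemA 0 := by
  refine ⟨IsLocallyConstant.const 0, fun t σ => by simp, ?_⟩
  have : Function.support (0 : S → R) = ∅ := Function.support_zero
  rw [this, Set.image_empty]
  exact isCompact_empty

lemma memA_neg {f : S → R} (hf : T.MemA f) : T.MemA (-f) := by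
  refine ⟨hf.1.neg, fun t σ => ?_, ?_⟩
  · simp only [Pi.neg_apply, hf.2.1 t σ, mul_neg]
  · have hsupp : Function.support (-f) = Function.support f := by
      ext σ; simp
    rw [hsupp]
    exact hf.2.2

lemma memA_indicator_src [T2Space G] {V : Set G} (hVcpt : IsCompact V) (hVopen : IsOpen V)
    {f : S → R} (hf : T.MemA f) :
    T.MemA (fun σ => if 𝒢.src (T.q σ) ∈ V then f σ else 0) := by
  have hcont : Continuous fun σ : S => 𝒢.src (T.q σ) := 𝒢.continuous_src.comp T.continuous_q
  have hopen : IsOpen {σ : S | 𝒢.src (T.q σ) ∈ V} := hVopen.preimage hcont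
  have hclosed : IsClosed {σ : S | 𝒢.src (T.q σ) ∈ V} := (hVcpt.isClosed).preimage hcont
  refine ⟨?_, ?_, ?_⟩
  · rw [IsLocallyConstant.iff_exists_open]
    intro σ
    by_cases h : 𝒢.src (T.q σ) ∈ V
    · obtain ⟨U, hUopen, hσU, hU⟩ := (IsLocallyConstant.iff_exists_open _).mp hf.1 σ
      refine ⟨U ∩ {σ : S | 𝒢.src (T.q σ) ∈ V}, hUopen.inter hopen, ⟨hσU, h⟩, ?_⟩
      rintro σ' ⟨h1, h2⟩
      have h2' : 𝒢.src (T.q σ') ∈ V := h2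
      show (if 𝒢.src (T.q σ') ∈ V then f σ' else 0) = (if 𝒢.src (T.q σ) ∈ V then f σ else 0)
      rw [if_pos h2', if_pos h]
      exact hU σ' h1
    · refine ⟨{σ : S | 𝒢.src (T.q σ) ∈ V}ᶜ, hclosed.isOpen_compl, h, ?_⟩
      intro σ' hσ'
      simp only [Set.mem_compl_iff, Set.mem_setOf_eq] at hσ'
      show (if 𝒢.src (T.q σ') ∈ V then f σ' else 0) = (if 𝒢.src (T.q σ) ∈ V then f σ else 0)
      rw [if_neg h, if_neg hσ']
  · intro t σ
    have hq : 𝒢.src (T.q (T.act t σ)) = 𝒢.src (T.q σ) := by rw [T.q_act]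
    show (if 𝒢.src (T.q (T.act t σ)) ∈ V then f (T.act t σ) else 0)
      = ((t⁻¹ : Rˣ) : R) * (if 𝒢.src (T.q σ) ∈ V then f σ else 0)
    rw [hq]
    by_cases h : 𝒢.src (T.q σ) ∈ V
    · rw [if_pos h, if_pos h, hf.2.1]
    · rw [if_neg h, if_neg h, mul_zero]
  · have hsupp : T.q '' Function.support (fun σ => if 𝒢.src (T.q σ) ∈ V then f σ else 0)
        = (T.q '' Function.support f) ∩ 𝒢.src ⁻¹' V := by
      ext γ
      constructor
      · rintro ⟨σ, hσ, rfl⟩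
        have hσ' : (if 𝒢.src (T.q σ) ∈ V then f σ else 0) ≠ 0 := hσ
        by_cases h : 𝒢.src (T.q σ) ∈ V
        · rw [if_pos h] at hσ'
          exact ⟨⟨σ, hσ', rfl⟩, h⟩
        · rw [if_neg h] at hσ'
          exact absurd rfl hσ'
      · rintro ⟨⟨σ, hσ, rfl⟩, h2⟩
        have h2' : 𝒢.src (T.q σ) ∈ V := h2
        refine ⟨σ, ?_, rfl⟩
        show (if 𝒢.src (T.q σ) ∈ V then f σ else 0) ≠ 0
        rw [if_pos h2']
        exact hσ
    rw [hsupp]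
    exact hf.2.2.inter_right (hVcpt.isClosed.preimage 𝒢.continuous_src)

lemma bisection_inv_continuousOn [T2Space G] {Y : Set G} (hYcpt : IsCompact Y)
    (hinj : Set.InjOn 𝒢.rng Y) (φ : G → G) (hφ : ∀ α ∈ Y, φ (𝒢.rng α) = α) :
    ContinuousOn φ (𝒢.rng '' Y) := by
  rw [continuousOn_iff']
  intro t ht
  refine ⟨(𝒢.rng '' (Y \ t))ᶜ, (((hYcpt.diff ht).image 𝒢.continuous_rng).isClosed).isOpen_compl, ?_⟩
  ext x
  constructor
  · rintro ⟨hxt, ⟨α, hα, rfl⟩⟩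
    refine ⟨?_, ⟨α, hα, rfl⟩⟩
    rintro ⟨α', hα', heq⟩
    have hx' : φ (𝒢.rng α) ∈ t := hxt
    rw [hφ α hα] at hx'
    have heq2 : α' = α := hinj hα'.1 hα heq
    subst heq2
    exact hα'.2 hx' 
  · rintro ⟨hnx, ⟨α, hα, rfl⟩⟩
    refine ⟨?_, ⟨α, hα, rfl⟩⟩
    rw [Set.mem_preimage, hφ α hα]
    by_contra hαt
    exact hnx ⟨α, ⟨hα, hαt⟩, rfl⟩

lemma exists_phi (SL : Slice T) : ∃ φ : G → G, (∀ α ∈ SL.Y, φ (𝒢.rng α) = α) ∧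
    (∀ x ∈ 𝒢.rng '' SL.Y, φ x ∈ SL.Y ∧ 𝒢.rng (φ x) = x) := by
  classical
  refine ⟨fun x => if h : ∃ α, α ∈ SL.Y ∧ 𝒢.rng α = x then h.choose else x, ?_, ?_⟩
  · intro α hα
    have hex : ∃ α', α' ∈ SL.Y ∧ 𝒢.rng α' = 𝒢.rng α := ⟨α, hα, rfl⟩
    simp only [dif_pos hex]
    exact SL.hYbis.2 hex.choose_spec.1 hα hex.choose_spec.2
  · rintro x ⟨α, hα, rfl⟩
    have hex : ∃ α', α' ∈ SL.Y ∧ 𝒢.rng α' = 𝒢.rng α := ⟨α, hα, rfl⟩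
    simp only [dif_pos hex]
    exact hex.choose_spec

lemma memA_conv_left [T2Space G] (SL : Slice T) (hYopen : IsOpen SL.Y)
    {f : S → R} (hf : T.MemA f) :
    T.MemA (T.conv (T.tilde SL.X) f) ∧
      T.q '' Function.support (T.conv (T.tilde SL.X) f) =
        (fun p : G × G => 𝒢.mul p.1 p.2) ''
          ((SL.Y ×ˢ (T.q '' Function.support f)) ∩ {p : G × G | 𝒢.src p.1 = 𝒢.rng p.2}) := by
  obtain ⟨φ, hφ1, hφ2⟩ := exists_phi SL
  set F := T.conv (T.tilde SL.X) f with hFdef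
  set U : Set S := (fun σ => 𝒢.rng (T.q σ)) ⁻¹' (𝒢.rng '' SL.Y) with hUdef
  set L : S → S := fun σ => 𝒮.mul (𝒮.inv (SL.P (φ (𝒢.rng (T.q σ))))) σ with hLdef
  have hrqcont : Continuous fun σ : S => 𝒢.rng (T.q σ) := 𝒢.continuous_rng.comp T.continuous_q
  have hUopen : IsOpen U := (𝒢.isOpenMap_rng _ hYopen).preimage hrqcont
  have hUclosed : IsClosed U :=
    ((SL.hYcpt.image 𝒢.continuous_rng).isClosed).preimage hrqcont
  have hfe := hf.2.1
  have hcompat : ∀ σ ∈ U, 𝒮.src (𝒮.inv (SL.P (φ (𝒢.rng (T.q σ))))) = 𝒮.rng σ := by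
    intro σ hσ
    obtain ⟨hm, hr⟩ := hφ2 _ hσ
    rw [𝒮.src_inv, T.rng_sigma_eq (SL.P _), SL.q_P hm, hr, ← T.rng_sigma_eq]
  have hFU : ∀ σ ∈ U, F σ = f (L σ) := by
    intro σ hσ
    obtain ⟨hm, hr⟩ := hφ2 _ hσ
    exact conv_left_eval SL hfe hm hr
  have hF0 : ∀ σ ∉ U, F σ = 0 := by
    intro σ hσ
    apply conv_left_zero
    intro α hα heq
    exact hσ ⟨α, hα, heq⟩
  have hφcont : ContinuousOn φ (𝒢.rng '' SL.Y) :=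
    bisection_inv_continuousOn SL.hYcpt SL.hYbis.2 φ hφ1
  have c1 : ContinuousOn (fun σ : S => φ (𝒢.rng (T.q σ))) U :=
    hφcont.comp hrqcont.continuousOn (fun σ hσ => hσ)
  have c2 : ContinuousOn (fun σ : S => SL.P (φ (𝒢.rng (T.q σ)))) U :=
    SL.hPcont.comp c1 (fun σ hσ => SL.hYB (hφ2 _ hσ).1)
  have c3 : ContinuousOn (fun σ : S => 𝒮.inv (SL.P (φ (𝒢.rng (T.q σ))))) U :=
    𝒮.continuous_inv.comp_continuousOn c2
  have hLcont : ContinuousOn L U :=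
    𝒮.continuousOn_mulMap c3 continuousOn_id hcompat
  have hlc : IsLocallyConstant F := by
    rw [IsLocallyConstant.iff_exists_open]
    intro σ
    by_cases hσ : σ ∈ U
    · obtain ⟨O, hOopen, hLO, hOconst⟩ := (IsLocallyConstant.iff_exists_open _).mp hf.1 (L σ)
      have hnb : L ⁻¹' O ∈ nhdsWithin σ U := hLcont σ hσ (hOopen.mem_nhds hLO)
      obtain ⟨u', hu'open, hσu', hsub⟩ := mem_nhdsWithin.mp hnb
      refine ⟨u' ∩ U, hu'open.inter hUopen, ⟨hσu', hσ⟩, ?_⟩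
      rintro σ' ⟨h1, h2⟩
      rw [hFU σ' h2, hFU σ hσ]
      exact hOconst _ (hsub ⟨h1, h2⟩)
    · exact ⟨Uᶜ, hUclosed.isOpen_compl, hσ,
        fun σ' hσ' => by rw [hF0 σ' hσ', hF0 σ hσ]⟩
  have heqv : ∀ (t : Rˣ) (σ : S), F (T.act t σ) = ((t⁻¹ : Rˣ) : R) * F σ := by
    intro t σ
    have hqe : 𝒢.rng (T.q (T.act t σ)) = 𝒢.rng (T.q σ) := by rw [T.q_act]
    by_cases hσ : σ ∈ U
    · have hσ' : T.act t σ ∈ U := by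
        show 𝒢.rng (T.q (T.act t σ)) ∈ 𝒢.rng '' SL.Y
        rw [hqe]; exact hσ
      rw [hFU _ hσ', hFU _ hσ]
      have hLact : L (T.act t σ) = T.act t (L σ) := by
        show 𝒮.mul (𝒮.inv (SL.P (φ (𝒢.rng (T.q (T.act t σ)))))) (T.act t σ)
          = T.act t (𝒮.mul (𝒮.inv (SL.P (φ (𝒢.rng (T.q σ))))) σ)
        rw [hqe, T.mul_act_right (hcompat σ hσ) t]
      rw [hLact, hfe]
    · have hσ' : T.act t σ ∉ U := by
        intro hmem
        apply hσ
        show 𝒢.rng (T.q σ) ∈ 𝒢.rng '' SL.Y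
        rw [← hqe]; exact hmem
      rw [hF0 _ hσ', hF0 _ hσ, mul_zero]
  have hsupp : T.q '' Function.support F = (fun p : G × G => 𝒢.mul p.1 p.2) ''
      ((SL.Y ×ˢ (T.q '' Function.support f)) ∩ {p : G × G | 𝒢.src p.1 = 𝒢.rng p.2}) := by
    ext γ
    constructor
    · rintro ⟨σ, hσ, rfl⟩
      rw [Function.mem_support] at hσ
      have hσU : σ ∈ U := by
        by_contra h
        exact hσ (hF0 σ h)
      obtain ⟨hαY, hαr⟩ := hφ2 _ hσU
      have hLsupp : L σ ∈ Function.support f := by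
        rw [Function.mem_support, ← hFU σ hσU]
        exact hσ
      have hqL : T.q (L σ) = 𝒢.mul (𝒢.inv (φ (𝒢.rng (T.q σ)))) (T.q σ) := by
        show T.q (𝒮.mul (𝒮.inv (SL.P (φ (𝒢.rng (T.q σ))))) σ) = _
        rw [T.q_mul _ _ (hcompat σ hσU), T.q_inv, SL.q_P hαY]
      refine ⟨(φ (𝒢.rng (T.q σ)), T.q (L σ)), ⟨⟨hαY, ⟨L σ, hLsupp, rfl⟩⟩, ?_⟩, ?_⟩
      · show 𝒢.src (φ (𝒢.rng (T.q σ))) = 𝒢.rng (T.q (L σ))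
        rw [hqL, 𝒢.rng_mul _ _ (by rw [𝒢.src_inv, hαr]), 𝒢.rng_inv]
      · show 𝒢.mul (φ (𝒢.rng (T.q σ))) (T.q (L σ)) = T.q σ
        rw [hqL, ← 𝒢.mul_assoc' _ _ _ (𝒢.rng_inv _).symm (by rw [𝒢.src_inv, hαr]),
          𝒢.mul_inv_self, hαr, 𝒢.rng_mul_self]
    · rintro ⟨⟨α, m⟩, ⟨⟨hαY, ⟨τ, hτ, rfl⟩⟩, hcomp'⟩, rfl⟩
      simp only [Set.mem_setOf_eq] at hcomp'
      have hPcomp : 𝒮.src (SL.P α) = 𝒮.rng τ := by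
        rw [T.src_sigma_eq (SL.P α), SL.q_P hαY, hcomp', ← T.rng_sigma_eq]
      have hqσ : T.q (𝒮.mul (SL.P α) τ) = 𝒢.mul α (T.q τ) := by
        rw [T.q_mul _ _ hPcomp, SL.q_P hαY]
      have hσU : 𝒮.mul (SL.P α) τ ∈ U := by
        show 𝒢.rng (T.q (𝒮.mul (SL.P α) τ)) ∈ 𝒢.rng '' SL.Y
        rw [hqσ, 𝒢.rng_mul _ _ hcomp']
        exact ⟨α, hαY, rfl⟩
      have hα' : φ (𝒢.rng (T.q (𝒮.mul (SL.P α) τ))) = α := by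
        rw [hqσ, 𝒢.rng_mul _ _ hcomp']
        exact hφ1 α hαY
      have hLσ : L (𝒮.mul (SL.P α) τ) = τ := by
        show 𝒮.mul (𝒮.inv (SL.P (φ (𝒢.rng (T.q (𝒮.mul (SL.P α) τ)))))) (𝒮.mul (SL.P α) τ) = τ
        rw [hα', ← 𝒮.mul_assoc' (𝒮.inv (SL.P α)) (SL.P α) τ (by rw [𝒮.src_inv]) hPcomp,
          𝒮.inv_mul_self]
        rw [𝒮.mul_unit_left (𝒮.src_mem_unit _) (by rw [hPcomp])]
      refine ⟨𝒮.mul (SL.P α) τ, ?_, hqσ⟩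
      rw [Function.mem_support, hFU _ hσU, hLσ]
      exact hτ
  refine ⟨⟨hlc, heqv, ?_⟩, hsupp⟩
  rw [hsupp]
  have hclosedset : IsClosed {p : G × G | 𝒢.src p.1 = 𝒢.rng p.2} :=
    isClosed_eq (𝒢.continuous_src.comp continuous_fst) (𝒢.continuous_rng.comp continuous_snd)
  have hKcpt : IsCompact ((SL.Y ×ˢ (T.q '' Function.support f)) ∩
      {p : G × G | 𝒢.src p.1 = 𝒢.rng p.2}) :=
    (SL.hYcpt.prod hf.2.2).inter_right hclosedset
  exact hKcpt.image_of_continuousOn (𝒢.continuousOn_mul.mono Set.inter_subset_right)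

end DiscreteTwist

namespace EtaleGroupoid

variable {G : Type u} [TopologicalSpace G]

lemma effective_step [T2Space G] {𝒢 : AmpleGroupoid G} (heff : 𝒢.Effective)
    {U : Set G} (hUopen : IsOpen U) (hUbis : 𝒢.IsBisection U)
    (hUd : ∀ γ ∈ U, γ ∉ 𝒢.unitSpace)
    {W : Set G} (hW : IsOpen W) (hWne : W.Nonempty) :
    ∃ V, V ⊆ W ∧ IsOpen V ∧ V.Nonempty ∧ ∀ γ ∈ U, ¬(𝒢.src γ ∈ V ∧ 𝒢.rng γ ∈ V) := by
  by_cases hB : (U ∩ 𝒢.src ⁻¹' W).Nonempty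
  · have hne : ∃ γ₀ ∈ U ∩ 𝒢.src ⁻¹' W, 𝒢.rng γ₀ ≠ 𝒢.src γ₀ := by
      by_contra hall
      push_neg at hall
      obtain ⟨γ₁, hγ₁⟩ := hB
      have hsub : U ∩ 𝒢.src ⁻¹' W ⊆ 𝒢.iso := fun γ hγ => hall γ hγ
      have hopen2 : IsOpen (U ∩ 𝒢.src ⁻¹' W) := hUopen.inter (hW.preimage 𝒢.continuous_src)
      have hint : U ∩ 𝒢.src ⁻¹' W ⊆ interior 𝒢.iso := interior_maximal hsub hopen2
      rw [heff] at hint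
      exact hUd γ₁ hγ₁.1 (hint hγ₁)
    obtain ⟨γ₀, hγ₀mem, hγ₀⟩ := hne
    obtain ⟨N2, N1, hN2open, hN1open, hrN2, hsN1, hdisj⟩ := t2_separation hγ₀
    refine ⟨W ∩ N1 ∩ 𝒢.src '' (U ∩ 𝒢.src ⁻¹' W ∩ 𝒢.rng ⁻¹' N2), fun x hx => hx.1.1, ?_, ?_, ?_⟩
    · exact (hW.inter hN1open).inter (𝒢.isOpenMap_src _
        ((hUopen.inter (hW.preimage 𝒢.continuous_src)).inter (hN2open.preimage 𝒢.continuous_rng)))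
    · exact ⟨𝒢.src γ₀, ⟨hγ₀mem.2, hsN1⟩, ⟨γ₀, ⟨hγ₀mem, hrN2⟩, rfl⟩⟩
    · rintro γ hγU ⟨hsV, hrV⟩
      obtain ⟨γ', hγ', heq⟩ := hsV.2
      have hγγ : γ' = γ := hUbis.1 hγ'.1.1 hγU heq
      subst hγγ
      exact Set.disjoint_left.mp hdisj hγ'.2 hrV.1.2
  · refine ⟨W, Set.Subset.rfl, hW, hWne, ?_⟩
    rintro γ hγU ⟨hsV, _⟩
    exact hB ⟨γ, hγU, hsV⟩

lemma effective_avoid [T2Space G] {𝒢 : AmpleGroupoid G} (heff : 𝒢.Effective)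
    {C D : Set G} (hC : IsCompact C) (hCd : ∀ γ ∈ C, γ ∉ 𝒢.unitSpace)
    (hD : IsOpen D) (hDne : D.Nonempty) :
    ∃ V, V ⊆ D ∧ IsOpen V ∧ V.Nonempty ∧
      ∀ γ ∈ C, ¬(𝒢.src γ ∈ V ∧ 𝒢.rng γ ∈ V) := by
  have hGc : IsOpen (𝒢.unitSpace)ᶜ := (𝒢.isClosed_unitSpace).isOpen_compl
  have hcov : C ⊆ ⋃ U ∈ {U : Set G | 𝒢.IsCOB U ∧ U ⊆ (𝒢.unitSpace)ᶜ}, U := by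
    intro γ hγ
    obtain ⟨v, hv, hγv, hvsub⟩ := 𝒢.ample.exists_subset_of_mem_open
      (show γ ∈ (𝒢.unitSpace)ᶜ from hCd γ hγ) hGc
    exact Set.mem_biUnion ⟨hv, hvsub⟩ hγv
  obtain ⟨ℬ, hℬsub, hℬfin, hℬcov⟩ := hC.elim_finite_subcover_image
    (fun U hU => hU.1.2.1) hcov
  have key : ∀ F : Finset (Set G), (∀ U ∈ F, 𝒢.IsCOB U ∧ U ⊆ (𝒢.unitSpace)ᶜ) →
      ∃ V, V ⊆ D ∧ IsOpen V ∧ V.Nonempty ∧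
        ∀ U ∈ F, ∀ γ ∈ U, ¬(𝒢.src γ ∈ V ∧ 𝒢.rng γ ∈ V) := by
    intro F
    induction F using Finset.induction_on with
    | empty =>
      intro _
      exact ⟨D, Set.Subset.rfl, hD, hDne, fun U hU => absurd hU (by simp)⟩
    | @insert a F' ha ih =>
      intro hprop
      obtain ⟨V', hV'D, hV'open, hV'ne, hV'⟩ :=
        ih (fun U hU => hprop U (Finset.mem_insert_of_mem hU))
      obtain ⟨hacob, hasub⟩ := hprop _ (Finset.mem_insert_self _ _)
      obtain ⟨V, hVV', hVopen, hVne, hV⟩ := effective_step heff hacob.2.1 hacob.2.2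
        (fun γ hγ => hasub hγ) hV'open hV'ne
      refine ⟨V, hVV'.trans hV'D, hVopen, hVne, ?_⟩
      intro U hU γ hγ hc
      rcases Finset.mem_insert.mp hU with rfl | hU'
      · exact hV γ hγ hc
      · exact hV' U hU' γ hγ ⟨hVV' hc.1, hVV' hc.2⟩
  obtain ⟨F, hF⟩ := hℬfin.exists_finset_coe
  obtain ⟨V, hVD, hVopen, hVne, hV⟩ := key F (fun U hU => hℬsub (by rw [← hF]; exact hU))
  refine ⟨V, hVD, hVopen, hVne, ?_⟩
  intro γ hγ hc
  obtain ⟨U, hUℬ, hγU⟩ := Set.mem_iUnion₂.mp (hℬcov hγ)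
  exact hV U (by rw [← hF] at hUℬ; exact hUℬ) γ hγU hc

end EtaleGroupoid

namespace DiscreteTwist

variable {R : Type w} [CommRing R] {G : Type u} {S : Type v}
  [TopologicalSpace G] [TopologicalSpace S]
  {𝒢 : AmpleGroupoid G} {𝒮 : EtaleGroupoid S} {T : DiscreteTwist R 𝒢 𝒮}

open EtaleGroupoid

/-- A unit slice with the openness of `X` given directly. -/
def mkUnitSlice (T : DiscreteTwist R 𝒢 𝒮) {V : Set G} (hVsub : V ⊆ 𝒢.unitSpace)
    (hVcpt : IsCompact V) (hXopen : IsOpen ((fun v => T.i v 1) '' V)) : Slice T where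
  Y := V
  B := 𝒢.unitSpace
  P := fun v => T.i v 1
  hYB := hVsub
  hBopen := 𝒢.isOpen_unitSpace
  hYcpt := hVcpt
  hYbis := by
    constructor
    · intro a ha b hb hab
      rwa [𝒢.src_of_unit (hVsub ha), 𝒢.src_of_unit (hVsub hb)] at hab
    · intro a ha b hb hab
      rwa [𝒢.rng_of_unit (hVsub ha), 𝒢.rng_of_unit (hVsub hb)] at hab
  hPcont := T.continuousOn_i 1
  hqP := fun α hα => T.q_i hα 1
  hXopen := hXopen

lemma Slice.memA_const_mul_tilde [T2Space G] (SL : Slice T) [Nontrivial R] {r : R}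
    (hr : r ≠ 0) : T.MemA (fun σ => r * T.tilde SL.X σ) := by
  have h0 := SL.tilde_memA (T := T)
  refine ⟨h0.1.comp (r * ·), ?_, ?_⟩
  · intro t σ
    show r * T.tilde SL.X (T.act t σ) = ((t⁻¹ : Rˣ) : R) * (r * T.tilde SL.X σ)
    rw [h0.2.1 t σ]
    ring
  · have hsupp : Function.support (fun σ => r * T.tilde SL.X σ) = T.q ⁻¹' SL.Y := by
      rw [← SL.tilde_support]
      ext σ
      simp only [Function.mem_support]
      constructor
      · intro h hc
        exact h (by rw [hc, mul_zero])
      · intro h hc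
        have hq : T.q σ ∈ SL.Y := by
          by_contra hqn
          exact h (SL.tilde_eq_zero hqn)
        obtain ⟨t, ht⟩ := SL.exists_rep hq
        rw [ht, SL.tilde_eval hq t] at hc
        apply hr
        have h2 := congrArg (fun x => x * ((t : Rˣ) : R)) hc
        simpa [mul_assoc, Units.inv_mul] using h2
    rw [hsupp, Set.image_preimage_eq SL.Y T.q_surj]
    exact SL.hYcpt

end DiscreteTwist

section Main

open EtaleGroupoid DiscreteTwist

theorem stmt_10' {R : Type*} [CommRing R] {G S : Type*}
    [TopologicalSpace G] [TopologicalSpace S] [T2Space G] [T2Space S]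
    {𝒢 : AmpleGroupoid G} {𝒮 : EtaleGroupoid S} (T : DiscreteTwist R 𝒢 𝒮)
    (heff : 𝒢.Effective)
    (hdense : 𝒮.unitSpace ⊆
      closure {u ∈ 𝒮.unitSpace | 𝒮.isoAt u ⊆ interior 𝒮.iso})
    {Q : Type*} [Ring Q] (π : (S → R) → Q)
    (hzero : π 0 = 0)
    (hadd : ∀ f g, T.MemA f → T.MemA g → π (f + g) = π f + π g)
    (hmul : ∀ f g, T.MemA f → T.MemA g → π (T.conv f g) = π f * π g) :
    Set.InjOn π {f | T.MemA f} ↔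
      ∀ W : Set S, W ⊆ 𝒮.unitSpace → W.Nonempty → IsCompact W → IsOpen W →
        ∀ r : R, r ≠ 0 → π (fun σ => r * T.tilde W σ) ≠ 0 := by
  classical
  constructor
  · -- injectivity implies the nonvanishing condition
    intro hinj W hWsub hWne hWcpt hWopen r hr
    haveI hR : Nontrivial R := nontrivial_of_ne r 0 hr
    have hVWsub : T.q '' W ⊆ 𝒢.unitSpace := by
      rintro _ ⟨w, hw, rfl⟩
      exact T.q_unit_bij.mapsTo (hWsub hw)
    have hVWcpt : IsCompact (T.q '' W) := hWcpt.image T.continuous_q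
    have himg : (fun v => T.i v 1) '' (T.q '' W) = W := by
      ext τ
      constructor
      · rintro ⟨_, ⟨w, hw, rfl⟩, rfl⟩
        have hww : w = T.i (T.q w) 1 := T.eq_i_one (T.q_unit_bij.mapsTo (hWsub hw)) (hWsub hw) rfl
        show T.i (T.q w) 1 ∈ W
        rwa [← hww]
      · intro hτ
        exact ⟨T.q τ, ⟨τ, hτ, rfl⟩,
          (T.eq_i_one (T.q_unit_bij.mapsTo (hWsub hτ)) (hWsub hτ) rfl).symm⟩
    set SW : Slice T := mkUnitSlice T hVWsub hVWcpt (by rw [himg]; exact hWopen) with hSW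
    have hXW : SW.X = W := himg
    intro hc
    have hMemA : T.MemA (fun σ => r * T.tilde SW.X σ) := SW.memA_const_mul_tilde hr
    rw [hXW] at hMemA
    have heqfn : (fun σ => r * T.tilde W σ) = (0 : S → R) := by
      apply hinj hMemA memA_zero
      rw [hc, hzero]
    obtain ⟨w₀, hw₀⟩ := hWne
    have hval : r * T.tilde W w₀ = 0 := congrFun heqfn w₀
    have hPw : SW.P (T.q w₀) = w₀ :=
      (T.eq_i_one (T.q_unit_bij.mapsTo (hWsub hw₀)) (hWsub hw₀) rfl).symm
    have htw : T.tilde W w₀ = 1 := by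
      have h1 := SW.tilde_eval (α := T.q w₀) ⟨w₀, hw₀, rfl⟩ 1
      rw [T.act_one, hPw, hXW] at h1
      rw [h1, inv_one, Units.val_one]
    rw [htw, mul_one] at hval
    exact hr hval
  · -- nonvanishing implies injectivity
    intro hnz f hfm g hgm hπeq
    have hf : T.MemA f := hfm
    have hg : T.MemA g := hgm
    by_contra hne
    have hex : ∃ σ₀, f σ₀ ≠ g σ₀ := by
      by_contra hall
      push_neg at hall
      exact hne (funext hall)
    obtain ⟨σ₀, hσ₀⟩ := hex
    haveI : Nontrivial R := nontrivial_of_ne _ _ hσ₀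
    set r : R := f σ₀ - g σ₀ with hrdef
    have hr : r ≠ 0 := sub_ne_zero.mpr hσ₀
    -- construct the slice through inv σ₀
    obtain ⟨B, hBopen, hα₀B, hBbis, P, hPcont, hqP, hFcont, hFuniq, hFopen⟩ :=
      T.loc_triv (𝒢.inv (T.q σ₀))
    obtain ⟨⟨β₀, t₀⟩, ⟨hβ₀B, hPt₀⟩, -⟩ := hFuniq (𝒮.inv σ₀) (by rw [T.q_inv]; exact hα₀B)
    have hqF : ∀ β ∈ B, T.q (𝒮.mul (T.i (𝒢.rng β) t₀) (P β)) = β := by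
      intro β hβ
      have hcomp : 𝒮.src (T.i (𝒢.rng β) t₀) = 𝒮.rng (P β) := by
        rw [T.src_i (𝒢.rng_mem_unit β) t₀, T.rng_sigma_eq (P β), hqP β hβ]
      rw [T.q_mul _ _ hcomp, T.q_i (𝒢.rng_mem_unit β), hqP β hβ]
      exact 𝒢.mul_unit_left (𝒢.rng_mem_unit β) rfl
    have hβ₀ : β₀ = 𝒢.inv (T.q σ₀) := by
      have h1 := congrArg T.q hPt₀
      rwa [hqF β₀ hβ₀B, T.q_inv] at h1
    subst hβ₀
    obtain ⟨B', hB'cob, hα₀B', hB'B⟩ := 𝒢.ample.exists_subset_of_mem_open hα₀B hBopen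
    set P' : G → S := fun β => 𝒮.mul (T.i (𝒢.rng β) t₀) (P β) with hP'def
    set SLX : Slice T := ⟨B', B, P', hB'B, hBopen, hB'cob.1, hB'cob.2.2, hFcont t₀, hqF,
      hFopen t₀ B' hB'B hB'cob.2.1⟩ with hSLX
    have hP'α₀ : P' (𝒢.inv (T.q σ₀)) = 𝒮.inv σ₀ := hPt₀
    -- the units and the distinguished point
    have hu₀ : 𝒢.src (T.q σ₀) ∈ 𝒢.unitSpace := 𝒢.src_mem_unit _
    set ρ : S := T.i (𝒢.src (T.q σ₀)) 1 with hρdef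
    have hqρ : T.q ρ = 𝒢.src (T.q σ₀) := T.q_i hu₀ 1
    have hrngα₀ : 𝒢.rng (𝒢.inv (T.q σ₀)) = 𝒢.src (T.q σ₀) := 𝒢.rng_inv _
    -- the convolutions with the slice
    set Ff : S → R := T.conv (T.tilde SLX.X) f with hFfdef
    set Fg : S → R := T.conv (T.tilde SLX.X) g with hFgdef
    have hTX : T.MemA (T.tilde SLX.X) := SLX.tilde_memA
    have hFfA : T.MemA Ff := (memA_conv_left SLX hB'cob.2.1 hf).1
    have hFgA : T.MemA Fg := (memA_conv_left SLX hB'cob.2.1 hg).1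
    have hrngeq : 𝒢.rng (𝒢.inv (T.q σ₀)) = 𝒢.rng (T.q ρ) := by
      rw [hqρ, 𝒢.rng_of_unit hu₀, hrngα₀]
    have hρsrc : ρ = 𝒮.src σ₀ := (T.src_sigma_eq σ₀).symm
    have hFfρ : Ff ρ = f σ₀ := by
      rw [hFfdef, conv_left_eval SLX hf.2.1 hα₀B' hrngeq]
      show f (𝒮.mul (𝒮.inv (P' (𝒢.inv (T.q σ₀)))) ρ) = f σ₀
      rw [hP'α₀, 𝒮.inv_inv, hρsrc, 𝒮.mul_src_self]
    have hFgρ : Fg ρ = g σ₀ := by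
      rw [hFgdef, conv_left_eval SLX hg.2.1 hα₀B' hrngeq]
      show g (𝒮.mul (𝒮.inv (P' (𝒢.inv (T.q σ₀)))) ρ) = g σ₀
      rw [hP'α₀, 𝒮.inv_inv, hρsrc, 𝒮.mul_src_self]
    -- local constancy around ρ
    obtain ⟨O1, hO1open, hρO1, hO1⟩ := (IsLocallyConstant.iff_exists_open _).mp hFfA.1 ρ
    obtain ⟨O2, hO2open, hρO2, hO2⟩ := (IsLocallyConstant.iff_exists_open _).mp hFgA.1 ρ
    have hOconst : ∀ τ ∈ O1 ∩ O2, Ff τ - Fg τ = r := by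
      rintro τ ⟨h1, h2⟩
      rw [hO1 τ h1, hO2 τ h2, hFfρ, hFgρ]
    -- pull back along i(·,1)
    have hcw : ContinuousWithinAt (fun x => T.i x 1) 𝒢.unitSpace (𝒢.src (T.q σ₀)) :=
      (T.continuousOn_i 1) _ hu₀
    have hnb : (fun x => T.i x 1) ⁻¹' (O1 ∩ O2) ∈ nhdsWithin (𝒢.src (T.q σ₀)) 𝒢.unitSpace :=
      hcw (((hO1open.inter hO2open)).mem_nhds ⟨hρO1, hρO2⟩)
    obtain ⟨N, hNopen, hu₀N, hNsub⟩ := mem_nhdsWithin.mp hnb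
    obtain ⟨D, hDcob, hu₀D, hDsub⟩ := 𝒢.ample.exists_subset_of_mem_open
      (show 𝒢.src (T.q σ₀) ∈ N ∩ 𝒢.unitSpace from ⟨hu₀N, hu₀⟩)
      (hNopen.inter 𝒢.isOpen_unitSpace)
    have hDunits : D ⊆ 𝒢.unitSpace := fun u hu => (hDsub hu).2
    have hDi : ∀ u ∈ D, Ff (T.i u 1) - Fg (T.i u 1) = r :=
      fun u hu => hOconst _ (hNsub (hDsub hu))
    -- the compact set to avoid
    set C : Set G := ((T.q '' Function.support Ff) ∪ (T.q '' Function.support Fg)) ∩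
      (𝒢.unitSpace)ᶜ with hCdef
    have hCcpt : IsCompact C :=
      (hFfA.2.2.union hFgA.2.2).inter_right (𝒢.isOpen_unitSpace).isClosed_compl
    have hCd : ∀ γ ∈ C, γ ∉ 𝒢.unitSpace := fun γ hγ => hγ.2
    obtain ⟨V₁, hV₁D, hV₁open, hV₁ne, hV₁⟩ :=
      effective_avoid heff hCcpt hCd hDcob.2.1 ⟨_, hu₀D⟩
    obtain ⟨v₀, hv₀⟩ := hV₁ne
    obtain ⟨V, hVcob, hv₀V, hVV₁⟩ := 𝒢.ample.exists_subset_of_mem_open hv₀ hV₁open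
    have hVsub : V ⊆ 𝒢.unitSpace := fun v hv => hDunits (hV₁D (hVV₁ hv))
    have hVD : V ⊆ D := fun v hv => hV₁D (hVV₁ hv)
    have hVopen : IsOpen V := hVcob.2.1
    have hVcpt : IsCompact V := hVcob.1
    set SV : Slice T := unitSlice T hVsub hVopen hVcpt with hSVdef
    have hTV : T.MemA (T.tilde SV.X) := SV.tilde_memA
    set Ff2 : S → R := T.conv Ff (T.tilde SV.X) with hFf2def
    set Fg2 : S → R := T.conv Fg (T.tilde SV.X) with hFg2def
    have hFf2A : T.MemA Ff2 := by
      have heq : Ff2 = fun σ => if 𝒢.src (T.q σ) ∈ V then Ff σ else 0 :=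
        funext (conv_right_unit hVsub hVopen hVcpt hFfA.2.1)
      rw [heq]
      exact memA_indicator_src hVcpt hVopen hFfA
    have hFg2A : T.MemA Fg2 := by
      have heq : Fg2 = fun σ => if 𝒢.src (T.q σ) ∈ V then Fg σ else 0 :=
        funext (conv_right_unit hVsub hVopen hVcpt hFgA.2.1)
      rw [heq]
      exact memA_indicator_src hVcpt hVopen hFgA
    set A : S → R := T.conv (T.tilde SV.X) Ff2 with hAdef
    set Bg : S → R := T.conv (T.tilde SV.X) Fg2 with hBgdef
    have hAA : T.MemA A := (memA_conv_left SV hVopen hFf2A).1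
    have hBgA : T.MemA Bg := (memA_conv_left SV hVopen hFg2A).1
    -- pointwise identity
    have hkey : ∀ σ, A σ - Bg σ = r * T.tilde SV.X σ := by
      intro σ
      rw [hAdef, hBgdef, conv_left_unit hVsub hVopen hVcpt hFf2A.2.1 σ,
        conv_left_unit hVsub hVopen hVcpt hFg2A.2.1 σ]
      by_cases hq : T.q σ ∈ V
      · have hu : T.q σ ∈ 𝒢.unitSpace := hVsub hq
        have hrq : 𝒢.rng (T.q σ) ∈ V := by rw [𝒢.rng_of_unit hu]; exact hq
        have hsq : 𝒢.src (T.q σ) ∈ V := by rw [𝒢.src_of_unit hu]; exact hq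
        rw [if_pos hrq, if_pos hrq, hFf2def, hFg2def,
          conv_right_unit hVsub hVopen hVcpt hFfA.2.1 σ,
          conv_right_unit hVsub hVopen hVcpt hFgA.2.1 σ, if_pos hsq, if_pos hsq]
        obtain ⟨t, ht⟩ := T.scalar_of_q_mem hu
        have hσact : σ = T.act t (T.i (T.q σ) 1) := by rw [T.act_i_one hu t]; exact ht
        have htilde : T.tilde SV.X σ = ((t⁻¹ : Rˣ) : R) := by
          rw [hσact]
          exact SV.tilde_eval hq t
        rw [htilde]
        conv_lhs => rw [hσact, hFfA.2.1 t, hFgA.2.1 t]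
        rw [← mul_sub, hDi (T.q σ) (hVD hq), mul_comm]
      · rw [SV.tilde_eq_zero hq, mul_zero]
        by_cases hrq : 𝒢.rng (T.q σ) ∈ V
        · rw [if_pos hrq, if_pos hrq, hFf2def, hFg2def,
            conv_right_unit hVsub hVopen hVcpt hFfA.2.1 σ,
            conv_right_unit hVsub hVopen hVcpt hFgA.2.1 σ]
          by_cases hsq : 𝒢.src (T.q σ) ∈ V
          · rw [if_pos hsq, if_pos hsq]
            have hqnu : T.q σ ∉ 𝒢.unitSpace := by
              intro hu
              apply hq
              rw [← 𝒢.rng_of_unit hu]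
              exact hrq
            have hFf0 : Ff σ = 0 := by
              by_contra h0
              have hC2 : T.q σ ∈ C := ⟨Or.inl ⟨σ, h0, rfl⟩, hqnu⟩
              exact hV₁ _ hC2 ⟨hVV₁ hsq, hVV₁ hrq⟩
            have hFg0 : Fg σ = 0 := by
              by_contra h0
              have hC2 : T.q σ ∈ C := ⟨Or.inr ⟨σ, h0, rfl⟩, hqnu⟩
              exact hV₁ _ hC2 ⟨hVV₁ hsq, hVV₁ hrq⟩
            rw [hFf0, hFg0, sub_self]
          · rw [if_neg hsq, if_neg hsq, sub_self]
        · rw [if_neg hrq, if_neg hrq, sub_self]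
    -- apply π
    have hπAB : π A = π Bg := by
      rw [hAdef, hBgdef, hmul _ _ hTV hFf2A, hmul _ _ hTV hFg2A, hFf2def, hFg2def,
        hmul _ _ hFfA hTV, hmul _ _ hFgA hTV, hFfdef, hFgdef,
        hmul _ _ hTX hf, hmul _ _ hTX hg, hπeq]
    have hπneg : π (-Bg) = -π Bg := by
      have h0 : π (Bg + -Bg) = π Bg + π (-Bg) := hadd _ _ hBgA (memA_neg hBgA)
      rw [add_neg_cancel, hzero] at h0
      exact (eq_neg_of_add_eq_zero_right h0.symm)
    have hfuneq : A + -Bg = (fun σ => r * T.tilde SV.X σ) := by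
      funext σ
      show A σ + -(Bg σ) = r * T.tilde SV.X σ
      rw [← sub_eq_add_neg]
      exact hkey σ
    have hcontr : π (fun σ => r * T.tilde SV.X σ) = 0 := by
      rw [← hfuneq, hadd _ _ hAA (memA_neg hBgA), hπneg, hπAB, add_neg_cancel]
    have hWsub2 : SV.X ⊆ 𝒮.unitSpace := by
      rintro _ ⟨v, hv, rfl⟩
      exact T.i_one_mem (hVsub hv)
    have hWne2 : SV.X.Nonempty := ⟨T.i v₀ 1, v₀, hv₀V, rfl⟩
    have hWcpt2 : IsCompact SV.X :=
      hVcpt.image_of_continuousOn ((T.continuousOn_i 1).mono hVsub)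
    have hWopen2 : IsOpen SV.X := SV.hXopen
    exact hnz SV.X hWsub2 hWne2 hWcpt2 hWopen2 r hr hcontr

end Main

end

/-- Cuntz–Krieger uniqueness theorem: for an effective ample
Hausdorff groupoid `G` and a discrete twist with
`X_Σ = {u ∈ Σ⁽⁰⁾ : Σᵤᵘ ⊆ Iso(Σ)°}` dense in `Σ⁽⁰⁾`, a ring homomorphism
`π : A_R(G;Σ) → Q` is injective iff `π (r 1̃_W) ≠ 0` for every nonempty compact
open `W ⊆ Σ⁽⁰⁾` and every nonzero `r ∈ R`. -/
theorem stmt_10 {R : Type*} [CommRing R] {G S : Type*}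
    [TopologicalSpace G] [TopologicalSpace S] [T2Space G] [T2Space S]
    {𝒢 : AmpleGroupoid G} {𝒮 : EtaleGroupoid S} (T : DiscreteTwist R 𝒢 𝒮)
    (heff : 𝒢.Effective)
    (hdense : 𝒮.unitSpace ⊆
      closure {u ∈ 𝒮.unitSpace | 𝒮.isoAt u ⊆ interior 𝒮.iso})
    {Q : Type*} [Ring Q] (π : (S → R) → Q)
    (hzero : π 0 = 0)
    (hadd : ∀ f g, T.MemA f → T.MemA g → π (f + g) = π f + π g)
    (hmul : ∀ f g, T.MemA f → T.MemA g → π (T.conv f g) = π f * π g) :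
    Set.InjOn π {f | T.MemA f} ↔
      ∀ W : Set S, W ⊆ 𝒮.unitSpace → W.Nonempty → IsCompact W → IsOpen W →
        ∀ r : R, r ≠ 0 → π (fun σ => r * T.tilde W σ) ≠ 0 := by
  exact stmt_10' T heff hdense π hzero hadd hmul
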